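/- Let A₁, …, A_r be nontrivial finite groups, at most one of which has order 2. Call an element of the direct product A₁ × ⋯ × A_r totally nontrivial if every one of its r components differs from the identity. Then every subgroup of A₁ × ⋯ × A_r that contains all totally nontrivial elements is equal to the whole group A₁ × ⋯ × A_r. -/
import Mathlib

lemma exists_two_factors {G : Type*} [Group G] [Finite G] (h3 : 3 ≤ Nat.card G)
    (g : G) : ∃ a b : G, a ≠ 1 ∧ b ≠ 1 ∧ a * b = g := by
  have : ∃ a : G, a ≠ 1 ∧ a ≠ g := by
    by_contra hcon
    push_neg at hcon
    have hsub : (Set.univ : Set G) ⊆ {1, g} := by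
      intro a _
      rcases eq_or_ne a 1 with h | h
      · exact Or.inl h
      · exact Or.inr (hcon a h)
    have hle : Nat.card G ≤ 2 := by
      calc Nat.card G = Nat.card (Set.univ : Set G) := (Nat.card_univ).symm
        _ ≤ Nat.card ({1, g} : Set G) := Nat.card_mono (Set.toFinite _) hsub
        _ ≤ 2 := by
            rw [Nat.card_coe_set_eq]
            simpa using Set.ncard_insert_le (1 : G) ({g} : Set G)
    omega
  obtain ⟨a, ha1, hag⟩ := this
  refine ⟨a, a⁻¹ * g, ha1, fun h => hag ?_, by group⟩
  have := inv_mul_eq_one.mp h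
  exact this

lemma exists_three_factors {G : Type*} [Group G] [Finite G] (h3 : 3 ≤ Nat.card G)
    (g : G) : ∃ a b c : G, a ≠ 1 ∧ b ≠ 1 ∧ c ≠ 1 ∧ a * b * c = g := by
  obtain ⟨a, b, ha, hb, hab⟩ := exists_two_factors h3 g
  obtain ⟨c, d, hc, hd, hcd⟩ := exists_two_factors h3 a
  exact ⟨c, d, b, hc, hd, hb, by rw [hcd, hab]⟩

lemma card_ge_three {G : Type*} [Group G] [Finite G] [Nontrivial G]
    (h : Nat.card G ≠ 2) : 3 ≤ Nat.card G := by
  have := Finite.one_lt_card_iff_nontrivial.mpr ‹Nontrivial G›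
  omega

/-- Let `A 1, …, A r` be nontrivial finite groups, at most one of which
has order 2.  Every subgroup of the direct product `A 1 × ⋯ × A r` containing all
"totally nontrivial" elements (those all of whose components differ from the identity)
is the whole group. -/
theorem stmt1 {r : ℕ} (A : Fin r → Type*) [∀ i, Group (A i)] [∀ i, Finite (A i)]
    (hA : ∀ i, Nontrivial (A i))
    (h2 : ∀ i j, Nat.card (A i) = 2 → Nat.card (A j) = 2 → i = j)
    (H : Subgroup (∀ i, A i))
    (hH : ∀ x : ∀ i, A i, (∀ i, x i ≠ 1) → x ∈ H) :
    H = ⊤ := by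
  haveI := hA
  rw [eq_top_iff]
  intro x _
  have sq_one : ∀ i, Nat.card (A i) = 2 → ∀ g : A i, g * g = 1 := by
    intro i hi g
    have : g ^ Nat.card (A i) = 1 := pow_card_eq_one'
    rw [hi] at this
    simpa [pow_two] using this
  by_cases hex : ∃ i₀, Nat.card (A i₀) = 2 ∧ x i₀ ≠ 1
  · obtain ⟨i₀, hi₀, hx₀⟩ := hex
    -- every component is a product of three nontrivial elements
    have key : ∀ i, ∃ a b c : A i, a ≠ 1 ∧ b ≠ 1 ∧ c ≠ 1 ∧ a * b * c = x i := by
      intro i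
      by_cases hi : i = i₀
      · subst hi
        exact ⟨x i, x i, x i, hx₀, hx₀, hx₀, by
          rw [sq_one i hi₀ (x i), one_mul]⟩
      · have hcard : Nat.card (A i) ≠ 2 := fun h => hi (h2 i i₀ h hi₀)
        exact exists_three_factors (card_ge_three hcard) (x i)
    choose a b c ha hb hc habc using key
    have : x = a * b * c := by
      funext i
      exact (habc i).symm
    rw [this]
    exact mul_mem (mul_mem (hH a ha) (hH b hb)) (hH c hc)
  · push_neg at hex
    have key : ∀ i, ∃ a b : A i, a ≠ 1 ∧ b ≠ 1 ∧ a * b = x i := by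
      intro i
      by_cases hi : Nat.card (A i) = 2
      · have hx1 : x i = 1 := hex i hi
        obtain ⟨t, ht⟩ := exists_ne (1 : A i)
        exact ⟨t, t, ht, ht, by rw [sq_one i hi t, hx1]⟩
      · exact exists_two_factors (card_ge_three hi) (x i)
    choose a b ha hb hab using key
    have : x = a * b := by
      funext i
      exact (hab i).symm
    rw [this]
    exact mul_mem (hH a ha) (hH b hb)
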